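/- Let G be a connected split graph without universal vertices. Then the set of minimal cutsets of G equals the set of inclusion-wise minimal open neighborhoods of G, i.e., the cutset hypergraph of G equals the neighborhood hypergraph of G. -/

import Mathlib

open SimpleGraph Finset BigOperators

variable {V : Type*} [Fintype V] [DecidableEq V]

/-- `S` is a connected dominating set of `G`: every vertex is in `S` or has a neighbor in `S`,
and any two vertices of `S` are joined by a walk staying inside `S`
(i.e. `S` induces a connected subgraph). -/
def SimpleGraph.IsCDSet (G : SimpleGraph V) (S : Finset V) : Prop :=
  (∀ v : V, v ∈ S ∨ ∃ u ∈ S, G.Adj u v) ∧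
  ∀ u ∈ S, ∀ v ∈ S, ∃ p : G.Walk u v, ∀ x ∈ p.support, x ∈ S

/-- `(w, t)` is a connected-domishold structure of `G`. -/
def SimpleGraph.IsCDStructure (G : SimpleGraph V) (w : V → ℝ) (t : ℝ) : Prop :=
  (∀ v, 0 ≤ w v) ∧ 0 ≤ t ∧ ∀ S : Finset V, (t ≤ ∑ x ∈ S, w x) ↔ G.IsCDSet S

/-- `G` is connected-domishold. -/
def SimpleGraph.ConnectedDomishold (G : SimpleGraph V) : Prop :=
  ∃ (w : V → ℝ) (t : ℝ), G.IsCDStructure w t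

/-- `S` is a cutset of `G`: `G - S` is disconnected, i.e. there exist two vertices outside `S`
such that every walk between them meets `S`. -/
def SimpleGraph.IsCutset (G : SimpleGraph V) (S : Finset V) : Prop :=
  ∃ u v : V, u ∉ S ∧ v ∉ S ∧ u ≠ v ∧ ∀ p : G.Walk u v, ∃ x ∈ p.support, x ∈ S

/-- `S` is a minimal cutset of `G`. -/
def SimpleGraph.IsMinCutset (G : SimpleGraph V) (S : Finset V) : Prop :=
  G.IsCutset S ∧ ∀ S' ⊆ S, G.IsCutset S' → S' = S

/-- A hypergraph on vertex set `V`, given by its hyperedge predicate `Eh`, is threshold. -/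
def HypThreshold (Eh : Finset V → Prop) : Prop :=
  ∃ (w : V → ℝ) (t : ℝ), (∀ v, 0 ≤ w v) ∧ 0 ≤ t ∧
    ∀ X : Finset V, (∑ v ∈ X, w v ≤ t) ↔ ∀ e, Eh e → ¬ e ⊆ X

def HypOneSperner (Eh : Finset V → Prop) : Prop :=
  ∀ e f, Eh e → Eh f → e ≠ f → min (e \ f).card (f \ e).card = 1

def HypTwoSummable (Eh : Finset V → Prop) : Prop :=
  ∃ A₁ A₂ B₁ B₂ : Finset V,
    (∃ e, Eh e ∧ e ⊆ A₁) ∧ (∃ e, Eh e ∧ e ⊆ A₂) ∧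
    (∀ e, Eh e → ¬ e ⊆ B₁) ∧ (∀ e, Eh e → ¬ e ⊆ B₂) ∧
    ∀ v : V, ((if v ∈ A₁ then 1 else 0) + (if v ∈ A₂ then 1 else 0) : ℕ)
           = (if v ∈ B₁ then 1 else 0) + (if v ∈ B₂ then 1 else 0)

/-- `v` is a universal vertex of `G`: adjacent to every other vertex. -/
def SimpleGraph.IsUniversalVtx (G : SimpleGraph V) (v : V) : Prop :=
  ∀ u : V, u ≠ v → G.Adj v u

/-- `G` is a split graph: its vertices partition into a clique `K` and an independent set. -/
def SimpleGraph.IsSplit (G : SimpleGraph V) : Prop :=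
  ∃ K : Finset V, G.IsClique (↑K : Set V) ∧
    ∀ u ∈ Kᶜ, ∀ v ∈ Kᶜ, u ≠ v → ¬ G.Adj u v

/-- `S` is an inclusion-wise minimal open neighborhood of `G`. -/
def SimpleGraph.IsMinNeighborhood (G : SimpleGraph V) [DecidableRel G.Adj]
    (S : Finset V) : Prop :=
  (∃ v : V, S = G.neighborFinset v) ∧
    ∀ u : V, G.neighborFinset u ⊆ S → G.neighborFinset u = S

lemma cutset_of_nbhd (G : SimpleGraph V) [DecidableRel G.Adj] {S : Finset V} {v u : V}
    (hv : v ∉ S) (hN : G.neighborFinset v ⊆ S) (hu : u ∉ S) (huv : u ≠ v) :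
    G.IsCutset S := by
  refine ⟨v, u, hv, hu, huv.symm, ?_⟩
  intro p
  cases p with
  | nil => exact absurd rfl huv
  | @cons _ w _ h q =>
      refine ⟨w, ?_, hN ((G.mem_neighborFinset v w).mpr h)⟩
      rw [SimpleGraph.Walk.support_cons]
      exact List.mem_cons_of_mem _ q.start_mem_support

lemma exists_nbhd_subset_of_cutset (G : SimpleGraph V) [DecidableRel G.Adj]
    (hsplit : G.IsSplit) {S : Finset V} (hc : G.IsCutset S) :
    ∃ a, a ∉ S ∧ G.neighborFinset a ⊆ S := by
  obtain ⟨K, hK, hI⟩ := hsplit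
  by_contra hcon
  push_neg at hcon
  have step : ∀ a, a ∉ S → ∃ a₀, a₀ ∈ K ∧ a₀ ∉ S ∧
      ∃ p : G.Walk a a₀, ∀ x ∈ p.support, x ∉ S := by
    intro a ha
    by_cases haK : a ∈ K
    · refine ⟨a, haK, ha, SimpleGraph.Walk.nil, ?_⟩
      intro x hx
      simp only [SimpleGraph.Walk.support_nil, List.mem_singleton] at hx
      subst hx; exact ha
    · obtain ⟨w, hwN, hwS⟩ := Finset.not_subset.mp (hcon a ha)
      have hadj : G.Adj a w := (G.mem_neighborFinset a w).mp hwN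
      have hwK : w ∈ K := by
        by_contra hwK
        exact hI a (Finset.mem_compl.mpr haK) w (Finset.mem_compl.mpr hwK) hadj.ne hadj
      refine ⟨w, hwK, hwS, SimpleGraph.Walk.cons hadj SimpleGraph.Walk.nil, ?_⟩
      intro x hx
      simp only [SimpleGraph.Walk.support_cons, SimpleGraph.Walk.support_nil,
        List.mem_cons, List.mem_singleton, List.not_mem_nil, or_false] at hx
      rcases hx with rfl | rfl
      · exact ha
      · exact hwS
  obtain ⟨a, b, haS, hbS, hab, hcut⟩ := hc
  obtain ⟨a₀, ha₀K, ha₀S, pa, hpa⟩ := step a haS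
  obtain ⟨b₀, hb₀K, hb₀S, pb, hpb⟩ := step b hbS
  have mid : ∃ q : G.Walk a₀ b₀, ∀ x ∈ q.support, x ∉ S := by
    by_cases h : a₀ = b₀
    · subst h
      refine ⟨SimpleGraph.Walk.nil, ?_⟩
      intro x hx
      simp only [SimpleGraph.Walk.support_nil, List.mem_singleton] at hx
      subst hx; exact ha₀S
    · refine ⟨SimpleGraph.Walk.cons (hK (Finset.mem_coe.mpr ha₀K)
        (Finset.mem_coe.mpr hb₀K) h) SimpleGraph.Walk.nil, ?_⟩
      intro x hx
      simp only [SimpleGraph.Walk.support_cons, SimpleGraph.Walk.support_nil,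
        List.mem_cons, List.mem_singleton, List.not_mem_nil, or_false] at hx
      rcases hx with rfl | rfl
      · exact ha₀S
      · exact hb₀S
  obtain ⟨q, hq⟩ := mid
  obtain ⟨x, hxsup, hxS⟩ := hcut ((pa.append q).append pb.reverse)
  rw [SimpleGraph.Walk.mem_support_append_iff,
    SimpleGraph.Walk.mem_support_append_iff] at hxsup
  rcases hxsup with (h1 | h2) | h3
  · exact hpa x h1 hxS
  · exact hq x h2 hxS
  · rw [SimpleGraph.Walk.support_reverse, List.mem_reverse] at h3
    exact hpb x h3 hxS

/-- In a connected split graph without universal vertices, the minimal cutsets are exactly the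
inclusion-wise minimal open neighborhoods: the cutset hypergraph equals the neighborhood
hypergraph. -/
theorem split_minCutsets_eq_minNeighborhoods (G : SimpleGraph V) [DecidableRel G.Adj]
    (hconn : G.Connected) (hsplit : G.IsSplit) (huniv : ∀ v : V, ¬ G.IsUniversalVtx v)
    (S : Finset V) :
    G.IsMinCutset S ↔ G.IsMinNeighborhood S := by
  have nonuniv : ∀ v : V, ∃ u, u ≠ v ∧ ¬ G.Adj v u := by
    intro v
    have h := huniv v
    unfold SimpleGraph.IsUniversalVtx at h
    push_neg at h
    exact h
  have nbhdCut : ∀ a : V, G.IsCutset (G.neighborFinset a) := by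
    intro a
    obtain ⟨u, hua, hadj⟩ := nonuniv a
    refine cutset_of_nbhd G ?_ (subset_refl _) ?_ hua
    · simp
    · simpa using hadj
  constructor
  · rintro ⟨hc, hmin⟩
    obtain ⟨a, haS, haN⟩ := exists_nbhd_subset_of_cutset G hsplit hc
    have hSa : G.neighborFinset a = S := hmin _ haN (nbhdCut a)
    exact ⟨⟨a, hSa.symm⟩, fun u hu => hmin _ hu (nbhdCut u)⟩
  · rintro ⟨⟨v, rfl⟩, hmin⟩
    refine ⟨nbhdCut v, ?_⟩
    intro S' hS' hc'
    obtain ⟨a, _, haN⟩ := exists_nbhd_subset_of_cutset G hsplit hc'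
    have h := hmin a (haN.trans hS')
    exact subset_antisymm hS' (h ▸ haN)
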